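/- Constrained Riccati update: for every z ∈ ℝⁿ, the minimal one-step cost-to-go satisfies min over u ∈ ℝᵐ of J(z,u) = J(z, −Kz) = ½ zᵀP'z, where P' := Q + KᵀRK + ĀᵀPĀ and Ā := A − BK − CL. -/

import Mathlib

open Matrix

lemma dot_tr {a b : ℕ} (X : Matrix (Fin a) (Fin b) ℝ) (v : Fin b → ℝ) (w : Fin a → ℝ) :
    v ⬝ᵥ (Xᵀ *ᵥ w) = (X *ᵥ v) ⬝ᵥ w := by
  rw [dotProduct_mulVec, vecMul_transpose]

lemma dot_symm {a : ℕ} (X : Matrix (Fin a) (Fin a) ℝ) (hX : Xᵀ = X)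
    (v w : Fin a → ℝ) : v ⬝ᵥ (X *ᵥ w) = w ⬝ᵥ (X *ᵥ v) := by
  conv_lhs => rw [← hX]
  rw [dot_tr, dotProduct_comm]

/-- Constrained Riccati update: for every `z`, the minimal one-step cost-to-go
satisfies `min_u J z u = J z (-K z) = ½ zᵀ P' z`, where
`P' = Q + Kᵀ R K + Āᵀ P Ā` and `Ā = A - B K - C L`. -/
theorem riccati_update {n m p : ℕ}
    (A : Matrix (Fin n) (Fin n) ℝ) (B : Matrix (Fin n) (Fin m) ℝ)
    (C : Matrix (Fin n) (Fin p) ℝ) (G : Matrix (Fin p) (Fin n) ℝ)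
    (hGC : IsUnit (G * C))
    (M : Matrix (Fin n) (Fin n) ℝ)
    (hM : M = 1 - C * (G * C)⁻¹ * G)
    (D : Matrix (Fin n) (Fin m) ℝ)
    (hD : D = B - C * (G * C)⁻¹ * (G * B))
    (Q : Matrix (Fin n) (Fin n) ℝ) (hQ : Q.PosSemidef)
    (R : Matrix (Fin m) (Fin m) ℝ) (hR : R.PosDef)
    (P : Matrix (Fin n) (Fin n) ℝ) (hP : P.PosSemidef)
    (J : (Fin n → ℝ) → (Fin m → ℝ) → ℝ)
    (hJ : J = fun z u =>
      (1 / 2) * (z ⬝ᵥ (Q *ᵥ z) + u ⬝ᵥ (R *ᵥ u) +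
        (M *ᵥ (A *ᵥ z + B *ᵥ u)) ⬝ᵥ (P *ᵥ (M *ᵥ (A *ᵥ z + B *ᵥ u)))))
    (K : Matrix (Fin m) (Fin n) ℝ)
    (hK : K = (R + Dᵀ * P * D)⁻¹ * (Dᵀ * P * M * A))
    (L : Matrix (Fin p) (Fin n) ℝ)
    (hL : L = (G * C)⁻¹ * (G * (A - B * K)))
    (Abar : Matrix (Fin n) (Fin n) ℝ)
    (hAbar : Abar = A - B * K - C * L)
    (P' : Matrix (Fin n) (Fin n) ℝ)
    (hP' : P' = Q + Kᵀ * R * K + Abarᵀ * P * Abar) :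
    ∀ z : Fin n → ℝ,
      (∀ u : Fin m → ℝ, J z (-(K *ᵥ z)) ≤ J z u) ∧
        J z (-(K *ᵥ z)) = (1 / 2) * (z ⬝ᵥ (P' *ᵥ z)) := by
  -- symmetry facts
  have hPt : Pᵀ = P := (by simpa using hP.1 : P.IsSymm)
  have hRt : Rᵀ = R := (by simpa using hR.1 : R.IsSymm)
  -- the matrix S
  set S : Matrix (Fin m) (Fin m) ℝ := R + Dᵀ * P * D with hSdef
  have hSpsd : (Dᵀ * P * D).PosSemidef := by
    have := hP.conjTranspose_mul_mul_same D
    simpa using this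
  have hSpd : S.PosDef := hR.add_posSemidef hSpsd
  have hSt : Sᵀ = S := (by simpa using hSpd.1 : S.IsSymm)
  have hSK : S * K = Dᵀ * P * M * A := by
    rw [hK, ← Matrix.mul_assoc,
      Matrix.mul_nonsing_inv _ hSpd.det_pos.ne'.isUnit, Matrix.one_mul]
  have hMB : M * B = D := by
    rw [hM, hD]
    simp [Matrix.sub_mul, Matrix.mul_assoc]
  have hAbar2 : Abar = M * A - D * K := by
    rw [hAbar, hL, hM, hD]
    simp only [Matrix.sub_mul, Matrix.mul_sub, Matrix.one_mul, Matrix.mul_assoc]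
    abel
  intro z
  set v : Fin m → ℝ := K *ᵥ z with hv
  set c : Fin n → ℝ := (M * A) *ᵥ z with hc
  have hMA : ∀ u : Fin m → ℝ, M *ᵥ (A *ᵥ z + B *ᵥ u) = c + D *ᵥ u := by
    intro u
    rw [Matrix.mulVec_add, Matrix.mulVec_mulVec, Matrix.mulVec_mulVec, hMB, hc]
  have hSK' : Dᵀ * P * (M * A) = S * K := by
    rw [hSK]; simp only [Matrix.mul_assoc]
  -- key scalar identities
  have h2 : ∀ u : Fin m → ℝ, (D *ᵥ u) ⬝ᵥ (P *ᵥ c) = u ⬝ᵥ (S *ᵥ v) := by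
    intro u
    rw [← dot_tr, hc, Matrix.mulVec_mulVec, Matrix.mulVec_mulVec, hSK',
      ← Matrix.mulVec_mulVec]
  have h1 : ∀ u : Fin m → ℝ, c ⬝ᵥ (P *ᵥ (D *ᵥ u)) = u ⬝ᵥ (S *ᵥ v) := by
    intro u
    rw [dot_symm P hPt, h2]
  have h3 : ∀ u w : Fin m → ℝ,
      (D *ᵥ u) ⬝ᵥ (P *ᵥ (D *ᵥ w)) = u ⬝ᵥ (S *ᵥ w) - u ⬝ᵥ (R *ᵥ w) := by
    intro u w
    rw [← dot_tr, Matrix.mulVec_mulVec, Matrix.mulVec_mulVec]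
    have : Dᵀ * P * D = S - R := by rw [hSdef]; abel
    rw [this, Matrix.sub_mulVec, dotProduct_sub]
  -- value of J
  have Jval : ∀ u : Fin m → ℝ, J z u =
      (1 / 2) * (z ⬝ᵥ (Q *ᵥ z) + c ⬝ᵥ (P *ᵥ c) + u ⬝ᵥ (S *ᵥ u)
        + 2 * (u ⬝ᵥ (S *ᵥ v)) - (u ⬝ᵥ (S *ᵥ u) - u ⬝ᵥ (R *ᵥ u))
        + (u ⬝ᵥ (S *ᵥ u) - u ⬝ᵥ (R *ᵥ u))) := by
    intro u
    simp only [hJ]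
    rw [hMA u]
    simp only [Matrix.mulVec_add, dotProduct_add, add_dotProduct]
    rw [h1 u, h2 u, h3 u u]
    ring
  have JvalNeg : J z (-v) =
      (1 / 2) * (z ⬝ᵥ (Q *ᵥ z) + c ⬝ᵥ (P *ᵥ c) - v ⬝ᵥ (S *ᵥ v)) := by
    rw [Jval (-v)]
    simp only [neg_dotProduct, Matrix.mulVec_neg, dotProduct_neg, neg_neg]
    ring
  refine ⟨fun u => ?_, ?_⟩
  · -- minimality
    rw [Jval u, JvalNeg]
    have hpos : 0 ≤ (u + v) ⬝ᵥ (S *ᵥ (u + v)) := by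
      have := hSpd.posSemidef.dotProduct_mulVec_nonneg (u + v)
      simpa using this
    have hexp : (u + v) ⬝ᵥ (S *ᵥ (u + v))
        = u ⬝ᵥ (S *ᵥ u) + u ⬝ᵥ (S *ᵥ v) + v ⬝ᵥ (S *ᵥ u) + v ⬝ᵥ (S *ᵥ v) := by
      simp only [Matrix.mulVec_add, dotProduct_add, add_dotProduct]
      ring
    have hsym : v ⬝ᵥ (S *ᵥ u) = u ⬝ᵥ (S *ᵥ v) := dot_symm S hSt v u
    rw [hexp, hsym] at hpos
    linarith
  · -- value identity
    have e1 : z ⬝ᵥ ((Kᵀ * R * K) *ᵥ z) = v ⬝ᵥ (R *ᵥ v) := by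
      rw [hv, Matrix.mul_assoc, ← Matrix.mulVec_mulVec, dot_tr, ← Matrix.mulVec_mulVec]
    have e2 : z ⬝ᵥ ((Abarᵀ * P * Abar) *ᵥ z) = (Abar *ᵥ z) ⬝ᵥ (P *ᵥ (Abar *ᵥ z)) := by
      rw [Matrix.mul_assoc, ← Matrix.mulVec_mulVec, dot_tr, ← Matrix.mulVec_mulVec]
    have e3 : Abar *ᵥ z = c - D *ᵥ v := by
      rw [hAbar2, Matrix.sub_mulVec, hc, hv, Matrix.mulVec_mulVec]
    have e4 : z ⬝ᵥ (P' *ᵥ z) = z ⬝ᵥ (Q *ᵥ z) + v ⬝ᵥ (R *ᵥ v)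
        + (c - D *ᵥ v) ⬝ᵥ (P *ᵥ (c - D *ᵥ v)) := by
      rw [hP', Matrix.add_mulVec, Matrix.add_mulVec, dotProduct_add, dotProduct_add,
        e1, e2, e3]
    have e5 : (c - D *ᵥ v) ⬝ᵥ (P *ᵥ (c - D *ᵥ v))
        = c ⬝ᵥ (P *ᵥ c) - 2 * (v ⬝ᵥ (S *ᵥ v)) + (v ⬝ᵥ (S *ᵥ v) - v ⬝ᵥ (R *ᵥ v)) := by
      simp only [Matrix.mulVec_sub, dotProduct_sub, sub_dotProduct]
      rw [h1 v, h2 v, h3 v v]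
      ring
    rw [JvalNeg, e4, e5]
    ring
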